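/- Let n ≥ 1, let m be a unit of ℤ/nℤ, and let M = F_n · P_{(·m)}. For λ ∈ ℂ, let t_λ, s_λ, and f_λ denote the multiplicity of λ as a root of the characteristic polynomial of M, of P_{(·(n−1))}, and of F_n, respectively. Then t_1 + t_{−1} = s_1 = f_1 + f_{−1} and t_i + t_{−i} = s_{−1} = f_i + f_{−i}. -/

import Mathlib

open Matrix Complex Polynomial

/-- The `n × n` Fourier matrix, with entries `F[j,k] = exp(2πi·jk/n)/√n`. -/
noncomputable def Fourier (n : ℕ) : Matrix (ZMod n) (ZMod n) ℂ :=
  Matrix.of fun j k =>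
    ((1 / Real.sqrt n : ℝ) : ℂ) *
      Complex.exp (2 * Real.pi * Complex.I * ((j.val : ℂ) * (k.val : ℂ)) / (n : ℂ))

/-- The permutation matrix of a map `σ`: `P[j,k] = 1` if `j = σ k`, else `0`. -/
def permMat {n : ℕ} (σ : ZMod n → ZMod n) : Matrix (ZMod n) (ZMod n) ℂ :=
  Matrix.of fun j k => if j = σ k then 1 else 0

/-! ### Auxiliary polynomial lemmas -/

lemma aux_comp_ne_zero {p g : ℂ[X]} (hp : p ≠ 0) (hg : g.natDegree ≠ 0) :
    p.comp g ≠ 0 := by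
  intro h
  have h2 := Polynomial.leadingCoeff_comp (p := p) hg
  rw [h, leadingCoeff_zero] at h2
  have hg0 : g ≠ 0 := fun h0 => hg (by simp [h0])
  rcases mul_eq_zero.mp h2.symm with h3 | h3
  · exact hp (leadingCoeff_eq_zero.mp h3)
  · exact (pow_ne_zero _ (leadingCoeff_ne_zero.mpr hg0)) h3

lemma aux_rm_comp_neg (p : ℂ[X]) (c : ℂ) :
    (p.comp (-X)).rootMultiplicity c = p.rootMultiplicity (-c) := by
  rcases eq_or_ne p 0 with rfl | hp
  · simp
  set k := p.rootMultiplicity (-c) with hk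
  set q := p /ₘ (X - C (-c)) ^ k with hqdef
  have hpf : (X - C (-c)) ^ k * q = p :=
    Polynomial.pow_mul_divByMonic_rootMultiplicity_eq p (-c)
  have hqe : q.eval (-c) ≠ 0 :=
    Polynomial.eval_divByMonic_pow_rootMultiplicity_ne_zero (-c) hp
  have h1 : ((X : ℂ[X]) - C (-c)).comp (-X) = -(X - C c) := by
    simp [Polynomial.sub_comp]
    ring
  have hcomp : p.comp (-X) = (X - C c) ^ k * ((-1 : ℂ[X]) ^ k * q.comp (-X)) := by
    rw [← hpf, Polynomial.mul_comp, Polynomial.pow_comp, h1, neg_pow]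
    ring
  have hne : p.comp (-X) ≠ 0 :=
    aux_comp_ne_zero hp (by simp)
  rw [hcomp] at hne ⊢
  rw [Polynomial.rootMultiplicity_mul hne, Polynomial.rootMultiplicity_X_sub_C_pow]
  have h0 : rootMultiplicity c ((-1 : ℂ[X]) ^ k * q.comp (-X)) = 0 := by
    apply Polynomial.rootMultiplicity_eq_zero
    simp only [Polynomial.IsRoot, Polynomial.eval_mul, Polynomial.eval_pow,
      Polynomial.eval_neg, Polynomial.eval_one, Polynomial.eval_comp, Polynomial.eval_X]
    exact mul_ne_zero (pow_ne_zero _ (by norm_num)) hqe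
  omega

lemma aux_rm_comp_sq (p : ℂ[X]) (hp : p ≠ 0) (c : ℂ) (hc : c ≠ 0) :
    (p.comp (X ^ 2)).rootMultiplicity c = p.rootMultiplicity (c * c) := by
  set k := p.rootMultiplicity (c * c) with hk
  set q := p /ₘ (X - C (c * c)) ^ k with hqdef
  have hpf : (X - C (c * c)) ^ k * q = p :=
    Polynomial.pow_mul_divByMonic_rootMultiplicity_eq p (c * c)
  have hqe : q.eval (c * c) ≠ 0 :=
    Polynomial.eval_divByMonic_pow_rootMultiplicity_ne_zero (c * c) hp
  have h1 : ((X : ℂ[X]) - C (c * c)).comp (X ^ 2) = (X - C c) * (X + C c) := by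
    rw [Polynomial.sub_comp, Polynomial.X_comp, Polynomial.C_comp, _root_.map_mul]
    ring
  have hcomp : p.comp (X ^ 2) = (X - C c) ^ k * ((X + C c) ^ k * q.comp (X ^ 2)) := by
    rw [← hpf, Polynomial.mul_comp, Polynomial.pow_comp, h1, mul_pow]
    ring
  have hne : p.comp (X ^ 2) ≠ 0 :=
    aux_comp_ne_zero hp (by simp)
  rw [hcomp] at hne ⊢
  rw [Polynomial.rootMultiplicity_mul hne, Polynomial.rootMultiplicity_X_sub_C_pow]
  have h0 : rootMultiplicity c ((X + C c) ^ k * q.comp (X ^ 2)) = 0 := by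
    apply Polynomial.rootMultiplicity_eq_zero
    simp only [Polynomial.IsRoot, Polynomial.eval_mul, Polynomial.eval_pow,
      Polynomial.eval_add, Polynomial.eval_C, Polynomial.eval_comp, Polynomial.eval_X]
    have : c + c ≠ 0 := by
      intro h
      apply hc
      have := add_self_eq_zero.mp h
      exact this
    exact mul_ne_zero (pow_ne_zero _ this) (by rw [sq]; exact hqe)
  omega

/-- Key abstract lemma: if `A * A = S`, the multiplicity of `c²` in `charpoly S` is the sum of the
multiplicities of `c` and `-c` in `charpoly A`. -/
lemma aux_charpoly_sq {ι : Type*} [Fintype ι] [DecidableEq ι]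
    (A S : Matrix ι ι ℂ) (h : A * A = S) (c : ℂ) (hc : c ≠ 0) :
    S.charpoly.rootMultiplicity (c * c) =
      A.charpoly.rootMultiplicity c + A.charpoly.rootMultiplicity (-c) := by
  classical
  set A' : Matrix ι ι ℂ[X] := (C : ℂ →+* ℂ[X]).mapMatrix A with hA'
  set B : Matrix ι ι ℂ[X] := Matrix.scalar ι X + A' with hB
  have hcomm : Matrix.scalar ι (X : ℂ[X]) * A' = A' * Matrix.scalar ι X :=
    (Matrix.scalar_commute (X : ℂ[X]) (fun r' => Commute.all _ _) A').eq
  -- charpoly S composed with X^2 equals det of (scalar (X^2) - S)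
  have hmap2 : (charmatrix S).map (eval₂RingHom (C : ℂ →+* ℂ[X]) (X ^ 2)) =
      Matrix.scalar ι ((X : ℂ[X]) ^ 2) - (C : ℂ →+* ℂ[X]).mapMatrix S := by
    ext i j
    by_cases hij : i = j
    · subst hij
      simp [Matrix.map_apply, Matrix.scalar_apply, Matrix.diagonal_apply_eq]
    · simp [Matrix.map_apply, hij, Matrix.scalar_apply, Matrix.diagonal_apply_ne _ hij]
  have hfact : Matrix.scalar ι ((X : ℂ[X]) ^ 2) - (C : ℂ →+* ℂ[X]).mapMatrix S =
      charmatrix A * B := by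
    rw [← h, charmatrix, hB, ← hA']
    have hs2 : Matrix.scalar ι ((X : ℂ[X]) ^ 2) =
        Matrix.scalar ι (X : ℂ[X]) * Matrix.scalar ι X := by
      rw [sq, _root_.map_mul]
    have hAA : (C : ℂ →+* ℂ[X]).mapMatrix (A * A) = A' * A' := by
      rw [_root_.map_mul]
    rw [hs2, hAA, sub_mul, mul_add, mul_add, hcomm]
    abel
  have key : S.charpoly.comp (X ^ 2) = A.charpoly * B.det := by
    have h1 : S.charpoly.comp (X ^ 2) =
        ((charmatrix S).map (eval₂RingHom (C : ℂ →+* ℂ[X]) (X ^ 2))).det := by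
      rw [Matrix.charpoly]
      show (eval₂RingHom (C : ℂ →+* ℂ[X]) (X ^ 2)) (charmatrix S).det = _
      rw [RingHom.map_det, RingHom.mapMatrix_apply]
    rw [h1, hmap2, hfact, Matrix.det_mul, Matrix.charpoly]
  have key2 : A.charpoly.comp (-X) = (-1 : ℂ[X]) ^ Fintype.card ι * B.det := by
    have h1 : A.charpoly.comp (-X) =
        ((charmatrix A).map (eval₂RingHom (C : ℂ →+* ℂ[X]) (-X))).det := by
      rw [Matrix.charpoly]
      show (eval₂RingHom (C : ℂ →+* ℂ[X]) (-X)) (charmatrix A).det = _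
      rw [RingHom.map_det, RingHom.mapMatrix_apply]
    have h2 : (charmatrix A).map (eval₂RingHom (C : ℂ →+* ℂ[X]) (-X)) = -B := by
      ext i j
      by_cases hij : i = j
      · subst hij
        simp [Matrix.map_apply, hB, hA', Matrix.scalar_apply, Matrix.diagonal_apply_eq]
        ring
      · simp [Matrix.map_apply, hij, hB, hA', Matrix.scalar_apply,
          Matrix.diagonal_apply_ne _ hij]
    rw [h1, h2, Matrix.det_neg]
  have hA0 : A.charpoly ≠ 0 := A.charpoly_monic.ne_zero
  have hS0 : S.charpoly ≠ 0 := S.charpoly_monic.ne_zero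
  have hcompA : A.charpoly.comp (-X) ≠ 0 := aux_comp_ne_zero hA0 (by simp)
  have hBdet : B.det ≠ 0 := by
    intro h0
    rw [key2, h0, mul_zero] at hcompA
    exact hcompA rfl
  have hu : ((-1 : ℂ[X]) ^ Fintype.card ι) = C ((-1 : ℂ) ^ Fintype.card ι) := by
    rw [_root_.map_pow, _root_.map_neg, _root_.map_one]
  have hrmB : B.det.rootMultiplicity c = A.charpoly.rootMultiplicity (-c) := by
    have h0 : (A.charpoly.comp (-X)).rootMultiplicity c =
        ((-1 : ℂ[X]) ^ Fintype.card ι * B.det).rootMultiplicity c := by rw [key2]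
    rw [aux_rm_comp_neg] at h0
    rw [Polynomial.rootMultiplicity_mul (by rw [← key2]; exact hcompA), hu,
      Polynomial.rootMultiplicity_C, zero_add] at h0
    exact h0.symm
  have hlhs : (S.charpoly.comp (X ^ 2)).rootMultiplicity c =
      S.charpoly.rootMultiplicity (c * c) := aux_rm_comp_sq _ hS0 c hc
  rw [← hlhs, key, Polynomial.rootMultiplicity_mul (mul_ne_zero hA0 hBdet), hrmB]

/-! ### The matrix computation -/

lemma aux_mul_permMat {n : ℕ} [NeZero n] (X : Matrix (ZMod n) (ZMod n) ℂ) (σ : ZMod n → ZMod n)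
    (j k : ZMod n) : (X * permMat σ) j k = X j (σ k) := by
  simp [Matrix.mul_apply, permMat, mul_ite]

lemma aux_Fourier_apply (n : ℕ) [NeZero n] (j k : ZMod n) :
    Fourier n j k = ((1 / Real.sqrt n : ℝ) : ℂ) * ZMod.stdAddChar (j * k) := by
  rw [Fourier]
  simp only [Matrix.of_apply]
  congr 1
  have h := ZMod.stdAddChar_coe (N := n) ((j.val : ℤ) * (k.val : ℤ))
  have h2 : (((j.val : ℤ) * (k.val : ℤ) : ℤ) : ZMod n) = j * k := by
    push_cast [ZMod.natCast_zmod_val]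
    ring
  rw [h2] at h
  rw [h]
  push_cast
  ring_nf

lemma aux_sq_eq (n : ℕ) [NeZero n] (m : (ZMod n)ˣ) :
    (Fourier n * permMat fun k => (m : ZMod n) * k) *
      (Fourier n * permMat fun k => (m : ZMod n) * k) =
      permMat (fun k : ZMod n => -k) := by
  have hn0 : (n : ℝ) ≠ 0 := Nat.cast_ne_zero.mpr (NeZero.ne n)
  have hnn : (0 : ℝ) ≤ (n : ℝ) := Nat.cast_nonneg n
  set c : ℂ := ((1 / Real.sqrt n : ℝ) : ℂ) with hcdef
  have hc2 : c * c * (n : ℂ) = 1 := by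
    rw [hcdef]
    have h1 : (1 / Real.sqrt n : ℝ) * (1 / Real.sqrt n : ℝ) = 1 / n := by
      rw [div_mul_div_comm, one_mul, Real.mul_self_sqrt hnn]
    rw [← Complex.ofReal_mul, h1]
    push_cast
    field_simp
    exact div_self (Nat.cast_ne_zero.mpr (NeZero.ne n))
  ext j l
  rw [Matrix.mul_apply]
  have hterm : ∀ k : ZMod n,
      ((Fourier n * permMat fun k => (m : ZMod n) * k : Matrix (ZMod n) (ZMod n) ℂ)) j k *
        ((Fourier n * permMat fun k => (m : ZMod n) * k : Matrix (ZMod n) (ZMod n) ℂ)) k l =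
      c * c * ZMod.stdAddChar (k * ((m : ZMod n) * (j + l))) := by
    intro k
    rw [aux_mul_permMat, aux_mul_permMat, aux_Fourier_apply, aux_Fourier_apply]
    have hadd : j * ((m : ZMod n) * k) + k * ((m : ZMod n) * l) =
        k * ((m : ZMod n) * (j + l)) := by ring
    rw [mul_mul_mul_comm, ← AddChar.map_add_eq_mul, hadd]
  rw [Finset.sum_congr rfl (fun k _ => hterm k), ← Finset.mul_sum,
    AddChar.sum_mulShift _ (ZMod.isPrimitive_stdAddChar n)]
  have hcond : ((m : ZMod n) * (j + l) = 0) ↔ (j = -l) := by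
    rw [Units.mul_right_eq_zero, add_eq_zero_iff_eq_neg]
  rw [permMat]
  simp only [Matrix.of_apply]
  by_cases hjl : j = -l
  · rw [if_pos (hcond.mpr hjl), if_pos hjl, ZMod.card]
    exact hc2
  · rw [if_neg (fun h => hjl (hcond.mp h)), if_neg hjl]
    simp

theorem eigenvalue_multiplicity_relations
    (n : ℕ) [NeZero n] (m : (ZMod n)ˣ)
    (M : Matrix (ZMod n) (ZMod n) ℂ)
    (hM : M = Fourier n * permMat fun k => (m : ZMod n) * k)
    (t s f : ℂ → ℕ)
    (ht : ∀ lam, t lam = M.charpoly.rootMultiplicity lam)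
    (hs : ∀ lam, s lam = (permMat fun k : ZMod n => -k).charpoly.rootMultiplicity lam)
    (hf : ∀ lam, f lam = (Fourier n).charpoly.rootMultiplicity lam) :
    (t 1 + t (-1) = s 1 ∧ s 1 = f 1 + f (-1)) ∧
    (t Complex.I + t (-Complex.I) = s (-1) ∧ s (-1) = f Complex.I + f (-Complex.I)) := by
  have hMS : M * M = permMat (fun k : ZMod n => -k) := by
    rw [hM]; exact aux_sq_eq n m
  have hFid : Fourier n * permMat (fun k : ZMod n => ((1 : (ZMod n)ˣ) : ZMod n) * k) =
      Fourier n := by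
    ext j k
    rw [aux_mul_permMat]
    norm_num
  have hFS : Fourier n * Fourier n = permMat (fun k : ZMod n => -k) := by
    rw [← hFid]
    exact aux_sq_eq n 1
  have hM1 := aux_charpoly_sq M _ hMS 1 one_ne_zero
  have hMI := aux_charpoly_sq M _ hMS Complex.I Complex.I_ne_zero
  have hF1 := aux_charpoly_sq (Fourier n) _ hFS 1 one_ne_zero
  have hFI := aux_charpoly_sq (Fourier n) _ hFS Complex.I Complex.I_ne_zero
  rw [mul_one] at hM1 hF1
  rw [Complex.I_mul_I] at hMI hFI
  simp only [ht, hs, hf]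
  exact ⟨⟨hM1.symm, hF1⟩, ⟨hMI.symm, hFI⟩⟩
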